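/- Let v_1, …, v_{r+1} be nonzero vectors in ℝ^r such that every r-element subset of {v_1,…,v_{r+1}} is linearly independent, and suppose the cones generated by all r-element subsets of {v_1,…,v_{r+1}} together cover ℝ^r with pairwise disjoint interiors. If q_1, …, q_{r+1} are real numbers, not all zero, with ∑_{i=1}^{r+1} q_i v_i = 0, then all the q_i have the same sign; in particular, after replacing (q_i) by (−q_i) if necessary, all q_i are positive. -/
import Mathlib


/-- If `v 1, …, v (r+1)` are nonzero vectors in `ℝ^r`, every `r`-element subset of them is
linearly independent, and the cones generated by the `r`-element subsets cover `ℝ^r` with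
pairwise disjoint interiors, then any nontrivial linear relation `∑ q i • v i = 0` has all
coefficients of the same sign. -/
theorem stmt6 (r : ℕ) (hr : 1 ≤ r) (v : Fin (r + 1) → EuclideanSpace ℝ (Fin r))
    (hv : ∀ i, v i ≠ 0)
    (hli : ∀ j : Fin (r + 1),
      LinearIndependent ℝ (fun i : {i : Fin (r + 1) // i ≠ j} => v i))
    (cone : Fin (r + 1) → Set (EuclideanSpace ℝ (Fin r)))
    (hcone : ∀ j, cone j =
      {x | ∃ c : Fin (r + 1) → ℝ, (∀ i, 0 ≤ c i) ∧ c j = 0 ∧ x = ∑ i, c i • v i})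
    (hcover : (⋃ j, cone j) = Set.univ)
    (hdisj : ∀ j j', j ≠ j' → interior (cone j) ∩ interior (cone j') = ∅)
    (q : Fin (r + 1) → ℝ) (hq : q ≠ 0) (hrel : ∑ i, q i • v i = 0) :
    (∀ i, 0 < q i) ∨ (∀ i, q i < 0) := by
  classical
  -- sum over subtype = full sum when coefficient at j vanishes
  have hsum : ∀ (j : Fin (r + 1)) (C : Fin (r + 1) → ℝ), C j = 0 →
      ∑ i : {i : Fin (r + 1) // i ≠ j}, C i • v i = ∑ i, C i • v i := by
    intro j C hCj
    rw [← Finset.sum_subtype (Finset.univ.erase j)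
      (by intro x; simp [Finset.mem_erase]) (fun i => C i • v i)]
    rw [← Finset.sum_erase_add Finset.univ (fun i => C i • v i) (Finset.mem_univ j)]
    simp [hCj]
  -- all q i are nonzero
  have hq0 : ∀ j, q j ≠ 0 := by
    intro j hj
    apply hq
    have key := Fintype.linearIndependent_iff.mp (hli j)
      (fun i : {i : Fin (r + 1) // i ≠ j} => q i)
      (by rw [hsum j q hj]; exact hrel)
    funext i
    by_cases h : i = j
    · rw [h, hj]; rfl
    · exact key ⟨i, h⟩
  -- interior membership criterion
  have hcard : ∀ j : Fin (r + 1),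
      Fintype.card {i : Fin (r + 1) // i ≠ j} = Module.finrank ℝ (EuclideanSpace ℝ (Fin r)) := by
    intro j; simp
  have hne : ∀ j : Fin (r + 1), Nonempty {i : Fin (r + 1) // i ≠ j} := by
    intro j
    have : Fintype.card {i : Fin (r + 1) // i ≠ j} = r := by simp
    refine Fintype.card_pos_iff.mp ?_
    omega
  have hint : ∀ (j : Fin (r + 1)) (C : Fin (r + 1) → ℝ), C j = 0 →
      (∀ i, i ≠ j → 0 < C i) → (∑ i, C i • v i) ∈ interior (cone j) := by
    intro j C hCj hCpos
    haveI := hne j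
    set B := basisOfLinearIndependentOfCardEqFinrank (hli j) (hcard j) with hB
    have hBv : ∀ i : {i : Fin (r + 1) // i ≠ j}, B i = v i := by
      intro i; rw [hB, coe_basisOfLinearIndependentOfCardEqFinrank]
    let e := B.equivFun.symm.toContinuousLinearEquiv
    have he : ∀ c : {i : Fin (r + 1) // i ≠ j} → ℝ, e c = ∑ i, c i • v i := by
      intro c
      show B.equivFun.symm c = _
      rw [Module.Basis.equivFun_symm_apply]
      exact Finset.sum_congr rfl (fun i _ => by rw [hBv])
    set U : Set ({i : Fin (r + 1) // i ≠ j} → ℝ) := {c | ∀ i, 0 < c i} with hU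
    have hUopen : IsOpen U := by
      have : U = Set.pi Set.univ (fun _ => Set.Ioi (0:ℝ)) := by
        ext c; simp [hU, Set.mem_pi]
      rw [this]
      exact isOpen_set_pi Set.finite_univ (fun _ _ => isOpen_Ioi)
    have himg : IsOpen (e '' U) := e.isOpenMap U hUopen
    have hmem : (∑ i, C i • v i) ∈ e '' U := by
      refine ⟨fun i => C i, fun i => hCpos i i.2, ?_⟩
      rw [he]
      exact hsum j C hCj
    have hsub : e '' U ⊆ cone j := by
      rintro x ⟨c, hc, rfl⟩
      rw [hcone]
      refine ⟨fun i => if h : i = j then 0 else c ⟨i, h⟩, ?_, by simp, ?_⟩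
      · intro i
        by_cases h : i = j
        · simp [h]
        · simpa [h] using (hc ⟨i, h⟩).le
      · rw [he]
        rw [← hsum j (fun i => if h : i = j then 0 else c ⟨i, h⟩) (by simp)]
        exact Finset.sum_congr rfl (fun i _ => by simp [i.2])
    exact mem_interior.mpr ⟨e '' U, hsub, himg, hmem⟩
  -- main argument
  by_contra hcon
  push_neg at hcon
  obtain ⟨⟨b, hb⟩, ⟨a, ha⟩⟩ := hcon
  -- q b ≤ 0 so q b < 0 ; q a ≥ 0 so q a > 0
  have hqb : q b < 0 := lt_of_le_of_ne hb (hq0 b)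
  have hqa : 0 < q a := lt_of_le_of_ne ha (Ne.symm (hq0 a))
  have hab : a ≠ b := by rintro rfl; exact absurd hqa (not_lt.mpr hqb.le)
  set C : Fin (r + 1) → ℝ := fun i => if i = a then 0 else if i = b then -q b else |q i| + 1
    with hC
  set D : Fin (r + 1) → ℝ := fun i => C i + q i with hD
  have hsumD : ∑ i, D i • v i = ∑ i, C i • v i := by
    simp only [hD, add_smul, Finset.sum_add_distrib, hrel, add_zero]
  have hCa : C a = 0 := by simp [hC]
  have hCpos : ∀ i, i ≠ a → 0 < C i := by
    intro i hi
    simp only [hC, if_neg hi]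
    by_cases h : i = b
    · simp [h]; linarith
    · simp [h]; positivity
  have hDb : D b = 0 := by
    simp [hD, hC, Ne.symm hab]
  have hDpos : ∀ i, i ≠ b → 0 < D i := by
    intro i hi
    by_cases h : i = a
    · subst h; simp [hD, hCa]; exact hqa
    · have : C i = |q i| + 1 := by simp [hC, h, hi]
      rw [hD]; simp only []
      rw [this]
      have := abs_nonneg (q i)
      have := neg_abs_le (q i)
      linarith
  have h1 := hint a C hCa hCpos
  have h2 := hint b D hDb hDpos
  rw [hsumD] at h2
  have := hdisj a b hab
  exact absurd this (by
    rw [Set.eq_empty_iff_forall_notMem]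
    push_neg
    exact ⟨_, h1, h2⟩)
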